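/- Rank equals distance in the small-distance regime: over F_3, suppose β : F_3^n → F_3 has support of size Δ where Δ equals the Hamming distance of β from P^n_{2n-2d-1} (i.e., β is a minimum-support representative of its coset) and Δ < 3^{d/2}. Then the matrix Q^β := Σ_x β(x)·e_x e_x^T has rank exactly Δ. -/

import Mathlib

open scoped BigOperators

noncomputable section

/-- The set of functions `F_p^n → F_p` computed by polynomials of total degree at most `d`
with individual degrees at most `p - 1`. -/
def PolyFns (p n d : ℕ) : Set ((Fin n → ZMod p) → ZMod p) :=
  {f | ∃ P : MvPolynomial (Fin n) (ZMod p),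
    P.totalDegree ≤ d ∧ (∀ i, P.degreeOf i ≤ p - 1) ∧ ∀ x, MvPolynomial.eval x P = f x}

/-- Inner product `⟨f,g⟩ = Σ_x f(x)·g(x)` on functions `F_p^n → F_p`. -/
def dotF {p n : ℕ} [NeZero p] (f g : (Fin n → ZMod p) → ZMod p) : ZMod p :=
  ∑ x : Fin n → ZMod p, f x * g x

/-- The dual of a set of functions under the inner product `dotF`. -/
def dualSet {p n : ℕ} [NeZero p] (S : Set ((Fin n → ZMod p) → ZMod p)) :
    Set ((Fin n → ZMod p) → ZMod p) :=
  {g | ∀ f ∈ S, dotF g f = 0}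

/-- Exponent vectors of monomials over `F_3` (individual degrees ≤ 2) of total degree ≤ d. -/
abbrev MonIdx (n d : ℕ) := {a : Fin n → Fin 3 // ∑ i, (a i : ℕ) ≤ d}

/-- The evaluation vector `e_x` of all monomials of degree ≤ d at the point `x`. -/
def evalVec {n d : ℕ} (x : Fin n → ZMod 3) : MonIdx n d → ZMod 3 :=
  fun a => ∏ i, (x i) ^ ((a.1 i : ℕ))

/-- The matrix `Q^β = Σ_x β(x)·e_x e_x^T`, indexed by monomials of degree ≤ d. -/
def Qmat (n d : ℕ) (β : (Fin n → ZMod 3) → ZMod 3) :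
    Matrix (MonIdx n d) (MonIdx n d) (ZMod 3) :=
  fun a b => ∑ x : Fin n → ZMod 3, β x * (evalVec x a * evalVec x b)

open Matrix


def red (k : ℕ) : ℕ := if k = 0 then 0 else if Even k then 2 else 1

lemma red_le (k : ℕ) : red k ≤ k := by
  simp only [red, Nat.even_iff]; split_ifs <;> omega

lemma red_lt3 (k : ℕ) : red k < 3 := by
  simp only [red, Nat.even_iff]; split_ifs <;> omega

lemma pow_red (t : ZMod 3) (k : ℕ) : t ^ k = t ^ red k := by
  induction k using Nat.strong_induction_on with
  | _ k IH =>
    match k with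
    | 0 => rfl
    | 1 => rfl
    | 2 => rfl
    | (m+3) =>
      have h3 : t ^ 3 = t := (by decide : ∀ s : ZMod 3, s ^ 3 = s) t
      have h : t ^ (m+3) = t ^ (m+1) := by
        calc t ^ (m+3) = t ^ m * t ^ 3 := by ring
        _ = t ^ m * t ^ 1 := by rw [h3, pow_one]
        _ = t ^ (m+1) := by ring
      rw [h, IH (m+1) (by omega)]
      congr 1
      simp only [red, Nat.even_iff]
      split_ifs <;> omega


lemma sq_prod_le {m p q : ℕ} (hp : m ≤ p ^ 2) (hq : m ≤ q ^ 2) : m ≤ p * q := by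
  have h : m ^ 2 ≤ (p * q) ^ 2 := by nlinarith
  exact (Nat.pow_le_pow_iff_left (by norm_num)).mp h

lemma key (n : ℕ) (d : ℕ) : ∀ S : Finset (Fin n → ZMod 3), ∀ c : (Fin n → ZMod 3) → ZMod 3,
    S.Nonempty → (∀ x ∈ S, c x ≠ 0) →
    (∀ a : Fin n → ℕ, (∑ i, a i) ≤ d → (∑ x ∈ S, c x * ∏ i, x i ^ a i) = 0) →
    3 ^ d ≤ S.card ^ 2 := by
  induction d using Nat.strong_induction_on with
  | _ d IH =>
  intro S c hne hc hsum
  have h0 : (∑ x ∈ S, c x) = 0 := by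
    have := hsum (fun _ => 0) (by simp)
    simpa using this
  have hcard2 : 2 ≤ S.card := by
    by_contra h
    push_neg at h
    have h1 : S.card = 1 := le_antisymm (by omega) (Finset.card_pos.mpr hne)
    obtain ⟨a, ha⟩ := Finset.card_eq_one.mp h1
    rw [ha, Finset.sum_singleton] at h0
    exact hc a (ha ▸ Finset.mem_singleton_self a) h0
  match d, hsum, IH with
  | 0, hsum, IH => nlinarith
  | 1, hsum, IH => nlinarith
  | (e+2), hsum, IH =>
  obtain ⟨u, hu⟩ := hne
  obtain ⟨v, hv, hvu⟩ := Finset.exists_mem_ne hcard2 u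
  have hex : ∃ i, v i ≠ u i := by
    by_contra h; push_neg at h; exact hvu (funext h)
  obtain ⟨i, hi⟩ := hex
  set F : ZMod 3 → Finset (Fin n → ZMod 3) := fun t => S.filter (fun x => x i = t) with hF
  -- shifted sums vanish
  have hshift : ∀ (j : ℕ) (a : Fin n → ℕ), (∑ k, a k) + j ≤ e+2 →
      (∑ x ∈ S, c x * (x i ^ j * ∏ k, x k ^ a k)) = 0 := by
    intro j a ha
    have h1 : (∑ k, Function.update a i (a i + j) k) = (∑ k, a k) + j := by
      rw [Finset.sum_update_of_mem (Finset.mem_univ i),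
        Finset.sum_eq_sum_sdiff_singleton_add (Finset.mem_univ i) a]
      ring
    have h2 := hsum (Function.update a i (a i + j)) (by rw [h1]; exact ha)
    rw [← h2]
    apply Finset.sum_congr rfl
    intro x _
    congr 1
    have hupd : ∀ k ∈ Finset.univ.erase i,
        x k ^ (Function.update a i (a i + j) k) = x k ^ a k := by
      intro k hk
      rw [Function.update_of_ne (Finset.mem_erase.mp hk).1]
    have hL : (∏ k, x k ^ a k) = x i ^ a i * ∏ k ∈ Finset.univ.erase i, x k ^ a k :=
      (Finset.mul_prod_erase Finset.univ (fun k => x k ^ a k) (Finset.mem_univ i)).symm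
    have hR : (∏ k, x k ^ Function.update a i (a i + j) k)
        = x i ^ (a i + j) * ∏ k ∈ Finset.univ.erase i, x k ^ a k := by
      rw [← Finset.mul_prod_erase Finset.univ _ (Finset.mem_univ i), Function.update_self]
      exact congrArg _ (Finset.prod_congr rfl hupd)
    rw [hL, hR, pow_add]
    ring
  -- class sums with quadratic indicator
  have hquad : ∀ t : ZMod 3, ∀ a : Fin n → ℕ, (∑ k, a k) ≤ e →
      (∑ x ∈ F t, c x * ∏ k, x k ^ a k) = 0 := by
    intro t a ha
    have hpt : ∀ x ∈ S, (if x i = t then c x * ∏ k, x k ^ a k else 0)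
        = c x * ((1 - (x i - t)^2) * ∏ k, x k ^ a k) := by
      intro x _
      by_cases hxt : x i = t
      · rw [if_pos hxt, hxt]; ring
      · rw [if_neg hxt]
        have hnz : x i - t ≠ 0 := sub_ne_zero.mpr hxt
        have hsq : (x i - t)^2 = 1 := by
          revert hnz; generalize x i - t = s; revert s; decide
        rw [hsq]; ring
    have h1 : (∑ x ∈ F t, c x * ∏ k, x k ^ a k)
        = ∑ x ∈ S, c x * ((1 - (x i - t)^2) * ∏ k, x k ^ a k) := by
      rw [hF]
      rw [Finset.sum_filter]
      exact Finset.sum_congr rfl hpt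
    rw [h1]
    have hexp : ∀ x : Fin n → ZMod 3, c x * ((1 - (x i - t)^2) * ∏ k, x k ^ a k)
        = (1 - t^2) * (c x * (x i ^ 0 * ∏ k, x k ^ a k))
          + (2*t) * (c x * (x i ^ 1 * ∏ k, x k ^ a k))
          + (-1) * (c x * (x i ^ 2 * ∏ k, x k ^ a k)) := by
      intro x; ring
    rw [Finset.sum_congr rfl (fun x _ => hexp x)]
    rw [Finset.sum_add_distrib, Finset.sum_add_distrib, ← Finset.mul_sum, ← Finset.mul_sum,
      ← Finset.mul_sum, hshift 0 a (by omega), hshift 1 a (by omega), hshift 2 a (by omega)]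
    ring
  -- class sums with linear isolator (when third class empty)
  have hlin : ∀ t s : ZMod 3, (∀ x ∈ S, x i = t ∨ x i = s) →
      ∀ a : Fin n → ℕ, (∑ k, a k) ≤ e+1 →
      (∑ x ∈ F t, c x * (x i - s) * ∏ k, x k ^ a k) = 0 := by
    intro t s hcov a ha
    have hpt : ∀ x ∈ S, (if x i = t then c x * (x i - s) * ∏ k, x k ^ a k else 0)
        = c x * (x i - s) * ∏ k, x k ^ a k := by
      intro x hx
      by_cases hxt : x i = t
      · rw [if_pos hxt]
      · rw [if_neg hxt]
        have hxs : x i = s := (hcov x hx).resolve_left hxt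
        rw [hxs, sub_self]; ring
    have h1 : (∑ x ∈ F t, c x * (x i - s) * ∏ k, x k ^ a k)
        = ∑ x ∈ S, c x * (x i - s) * ∏ k, x k ^ a k := by
      rw [hF, Finset.sum_filter]
      exact Finset.sum_congr rfl hpt
    rw [h1]
    have hexp : ∀ x : Fin n → ZMod 3, c x * (x i - s) * ∏ k, x k ^ a k
        = c x * (x i ^ 1 * ∏ k, x k ^ a k) + (-s) * (c x * (x i ^ 0 * ∏ k, x k ^ a k)) := by
      intro x; ring
    rw [Finset.sum_congr rfl (fun x _ => hexp x), Finset.sum_add_distrib, ← Finset.mul_sum,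
      hshift 1 a (by omega), hshift 0 a (by omega)]
    ring
  -- counting
  have hcardsum : S.card = ∑ t : ZMod 3, (F t).card := by
    rw [hF]
    exact Finset.card_eq_sum_card_fiberwise (fun x _ => Finset.mem_univ (x i))
  have hsub : ∀ t, ∀ x ∈ F t, c x ≠ 0 := fun t x hx => hc x (Finset.mem_filter.mp hx).1
  by_cases hall : ∀ t : ZMod 3, (F t).Nonempty
  · -- three nonempty classes
    have hb : ∀ t : ZMod 3, 3 ^ e ≤ (F t).card ^ 2 := fun t =>
      IH e (by omega) (F t) c (hall t) (hsub t) (hquad t)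
    have huniv : (Finset.univ : Finset (ZMod 3)) = {0, 1, 2} := by decide
    have h012 : S.card = (F 0).card + (F 1).card + (F 2).card := by
      rw [hcardsum, huniv, Finset.sum_insert (by decide), Finset.sum_insert (by decide),
        Finset.sum_singleton]
      ring
    have p01 : 3 ^ e ≤ (F 0).card * (F 1).card := sq_prod_le (hb 0) (hb 1)
    have p02 : 3 ^ e ≤ (F 0).card * (F 2).card := sq_prod_le (hb 0) (hb 2)
    have p12 : 3 ^ e ≤ (F 1).card * (F 2).card := sq_prod_le (hb 1) (hb 2)
    have hpow : (3:ℕ) ^ (e+2) = 9 * 3 ^ e := by ring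
    nlinarith [hb 0, hb 1, hb 2]
  · push_neg at hall
    obtain ⟨t3, ht3⟩ := hall
    set t1 := u i with ht1
    set t2 := v i with ht2
    have hut1 : u ∈ F t1 := Finset.mem_filter.mpr ⟨hu, rfl⟩
    have hvt2 : v ∈ F t2 := Finset.mem_filter.mpr ⟨hv, rfl⟩
    have h12 : t1 ≠ t2 := fun h => hi h.symm
    have h31 : t3 ≠ t1 := by
      intro h
      rw [← h, ht3] at hut1
      exact Finset.notMem_empty u hut1
    have h32 : t3 ≠ t2 := by
      intro h
      rw [← h, ht3] at hvt2
      exact Finset.notMem_empty v hvt2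
    have hcov : ∀ x ∈ S, x i = t1 ∨ x i = t2 := by
      intro x hx
      have hx3 : x i ≠ t3 := by
        intro h
        have hmem : x ∈ F t3 := Finset.mem_filter.mpr ⟨hx, h⟩
        rw [ht3] at hmem
        exact Finset.notMem_empty x hmem
      have hZ : ∀ s a b c : ZMod 3, a ≠ b → c ≠ a → c ≠ b → s ≠ c → s = a ∨ s = b := by decide
      exact hZ (x i) t1 t2 t3 h12 h31 h32 hx3
    have hb1 : 3 ^ (e+1) ≤ (F t1).card ^ 2 := by
      apply IH (e+1) (by omega) (F t1) (fun x => c x * (x i - t2)) ⟨u, hut1⟩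
      · intro x hx
        obtain ⟨hxS, hxi⟩ := Finset.mem_filter.mp hx
        exact mul_ne_zero (hc x hxS) (sub_ne_zero.mpr (by rw [hxi]; exact h12))
      · intro a ha
        simpa using hlin t1 t2 hcov a ha
    have hb2 : 3 ^ (e+1) ≤ (F t2).card ^ 2 := by
      apply IH (e+1) (by omega) (F t2) (fun x => c x * (x i - t1)) ⟨v, hvt2⟩
      · intro x hx
        obtain ⟨hxS, hxi⟩ := Finset.mem_filter.mp hx
        exact mul_ne_zero (hc x hxS) (sub_ne_zero.mpr (by rw [hxi]; exact h12.symm))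
      · intro a ha
        simpa using hlin t2 t1 (fun x hx => (hcov x hx).symm) a ha
    have hdisj : Disjoint (F t1) (F t2) := by
      rw [Finset.disjoint_left]
      intro x hx1 hx2
      exact h12 (((Finset.mem_filter.mp hx1).2).symm.trans (Finset.mem_filter.mp hx2).2)
    have hle : (F t1).card + (F t2).card ≤ S.card := by
      rw [← Finset.card_union_of_disjoint hdisj]
      exact Finset.card_le_card
        (Finset.union_subset (Finset.filter_subset _ _) (Finset.filter_subset _ _))
    have p12' : 3 ^ (e+1) ≤ (F t1).card * (F t2).card := sq_prod_le hb1 hb2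
    have hpow : (3:ℕ) ^ (e+2) = 3 * 3 ^ (e+1) := by ring
    nlinarith [hb1, hb2, p12', hle]


/-- If `β` is a minimum-support representative of its coset modulo
`P^n_{2n-2d-1}` with support size `Δ < 3^{d/2}`, then `rank(Q^β) = Δ`. -/

theorem rank_Q_eq_dist (n d Δ : ℕ) (β : (Fin n → ZMod 3) → ZMod 3)
    (hsupp : {x | β x ≠ 0}.ncard = Δ)
    (hmin : ∀ g ∈ PolyFns 3 n (2 * n - 2 * d - 1), Δ ≤ {x | β x ≠ g x}.ncard)
    (hΔ : (Δ : ℝ) < 3 ^ ((d : ℝ) / 2)) :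
    (Qmat n d β).rank = Δ := by
  haveI : Fact (Nat.Prime 3) := ⟨by norm_num⟩
  classical
  set S : Finset (Fin n → ZMod 3) := Finset.univ.filter (fun x => β x ≠ 0) with hS
  have hmemS : ∀ x : Fin n → ZMod 3, x ∈ S ↔ β x ≠ 0 := by
    intro x; simp [hS]
  have hScard : S.card = Δ := by
    rw [← hsupp, Set.ncard_eq_toFinset_card']
    congr 1
    ext x
    simp [hS]
  have hΔsq : Δ ^ 2 < 3 ^ d := by
    have h3 : ((3:ℝ) ^ ((d:ℝ)/2))^2 = (3:ℝ)^(d:ℕ) := by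
      rw [← Real.rpow_natCast ((3:ℝ) ^ ((d:ℝ)/2)) 2, ← Real.rpow_mul (by norm_num : (0:ℝ) ≤ 3),
        show ((d:ℝ)/2 * (2:ℕ)) = ((d:ℕ):ℝ) by push_cast; ring, Real.rpow_natCast]
    have h4 : ((Δ:ℝ))^2 < (3:ℝ)^(d:ℕ) := by
      calc ((Δ:ℝ))^2 < ((3:ℝ) ^ ((d:ℝ)/2))^2 := by
            apply pow_lt_pow_left₀ hΔ (Nat.cast_nonneg Δ) (by norm_num)
        _ = _ := h3
    exact_mod_cast h4
  set B : Matrix S (MonIdx n d) (ZMod 3) := Matrix.of (fun x a => evalVec x.1 a) with hB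
  set D : Matrix S S (ZMod 3) := Matrix.diagonal (fun x => β x.1) with hD
  have hDB : ∀ (x : S) (b : MonIdx n d), (D * B) x b = β x.1 * B x b := by
    intro x b
    rw [hD, Matrix.diagonal_mul]
  have hfac : Qmat n d β = Bᵀ * (D * B) := by
    ext a b
    simp only [Qmat, Matrix.mul_apply, Matrix.transpose_apply]
    calc (∑ x : Fin n → ZMod 3, β x * (evalVec x a * evalVec x b))
        = ∑ x ∈ S, β x * (evalVec x a * evalVec x b) := by
          refine (Finset.sum_subset (Finset.subset_univ S) (fun x _ hx => ?_)).symm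
          have hb0 : β x = 0 := not_not.mp (fun hb => hx ((hmemS x).mpr hb))
          rw [hb0, zero_mul]
      _ = ∑ x ∈ S.attach, β x.1 * (evalVec x.1 a * evalVec x.1 b) :=
          (Finset.sum_attach S (fun y => β y * (evalVec y a * evalVec y b))).symm
      _ = ∑ x : S, B x a * (D * B) x b := by
          rw [Finset.univ_eq_attach]
          refine Finset.sum_congr rfl (fun x _ => ?_)
          rw [hDB x b]
          simp only [hB, Matrix.of_apply]
          ring
  have hinj : Function.Injective (Bᵀ.mulVecLin) := by
    rw [← LinearMap.ker_eq_bot, LinearMap.ker_eq_bot']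
    intro v hv
    rw [Matrix.mulVecLin_apply] at hv
    have hv' : ∀ a : MonIdx n d, (∑ x ∈ S.attach, v x * evalVec x.1 a) = 0 := by
      intro a
      have h := congrFun hv a
      simp only [Matrix.mulVec, dotProduct, Matrix.transpose_apply, hB,
        Matrix.of_apply, Pi.zero_apply, Finset.univ_eq_attach] at h
      rw [← h]
      exact Finset.sum_congr rfl (fun x _ => mul_comm _ _)
    set c : (Fin n → ZMod 3) → ZMod 3 := fun y => if h : y ∈ S then v ⟨y, h⟩ else 0 with hcdef
    set S' : Finset (Fin n → ZMod 3) := S.filter (fun y => c y ≠ 0) with hS'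
    have hcv : ∀ x : S, c x.1 = v x := by
      intro x
      simp only [hcdef]
      rw [dif_pos x.2]
    have hsum' : ∀ a : Fin n → ℕ, (∑ k, a k) ≤ d → (∑ y ∈ S', c y * ∏ k, y k ^ a k) = 0 := by
      intro a ha
      set am : MonIdx n d := ⟨fun k => ⟨red (a k), red_lt3 _⟩, by
        calc (∑ k, ((⟨red (a k), red_lt3 (a k)⟩ : Fin 3) : ℕ)) = ∑ k, red (a k) := rfl
        _ ≤ ∑ k, a k := Finset.sum_le_sum (fun k _ => red_le (a k))
        _ ≤ d := ha⟩ with ham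
      have e1 : (∑ y ∈ S', c y * ∏ k, y k ^ a k) = ∑ y ∈ S, c y * ∏ k, y k ^ a k :=
        Finset.sum_filter_of_ne (fun y _ hfy hcy => hfy (by rw [hcy, zero_mul]))
      have e2 : (∑ y ∈ S, c y * ∏ k, y k ^ a k) = ∑ y ∈ S, c y * evalVec y am := by
        refine Finset.sum_congr rfl (fun y _ => ?_)
        congr 1
        exact Finset.prod_congr rfl (fun k _ => pow_red (y k) (a k))
      have e3 : (∑ y ∈ S, c y * evalVec y am) = ∑ x ∈ S.attach, v x * evalVec x.1 am := by
        rw [← Finset.sum_attach S (fun y => c y * evalVec y am)]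
        exact Finset.sum_congr rfl (fun x _ => by rw [hcv x])
      rw [e1, e2, e3]
      exact hv' am
    by_cases hne : S'.Nonempty
    · exfalso
      have hkey := key n d S' c hne (fun x hx => (Finset.mem_filter.mp hx).2) hsum'
      have hle : S'.card ≤ Δ := hScard ▸ Finset.card_le_card (Finset.filter_subset _ _)
      have : (3:ℕ) ^ d ≤ Δ ^ 2 := le_trans hkey (Nat.pow_le_pow_left hle 2)
      omega
    · rw [Finset.not_nonempty_iff_eq_empty] at hne
      funext x
      have hc0 : c x.1 = 0 := by
        by_contra hcc
        have hmem : x.1 ∈ S' := Finset.mem_filter.mpr ⟨x.2, hcc⟩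
        rw [hne] at hmem
        exact Finset.notMem_empty _ hmem
      show v x = 0
      rw [← hcv x]
      exact hc0
  have hr1 : Module.finrank (ZMod 3) (LinearMap.range (Bᵀ.mulVecLin)) = Δ := by
    rw [LinearMap.finrank_range_of_inj hinj, Module.finrank_fintype_fun_eq_card,
      Fintype.card_coe, hScard]
  have hBrank : B.rank = Δ := by
    rw [← Matrix.rank_transpose]
    exact hr1
  have hBsurj : Function.Surjective B.mulVecLin := by
    rw [← LinearMap.range_eq_top]
    apply Submodule.eq_top_of_finrank_eq
    rw [Module.finrank_fintype_fun_eq_card, Fintype.card_coe, hScard]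
    exact hBrank
  have hDsurj : Function.Surjective D.mulVecLin := by
    intro w
    refine ⟨fun x => (β x.1)⁻¹ * w x, ?_⟩
    funext x
    rw [Matrix.mulVecLin_apply, hD, Matrix.mulVec_diagonal]
    have hbx : β x.1 ≠ 0 := (hmemS x.1).mp x.2
    rw [← mul_assoc, mul_inv_cancel₀ hbx, one_mul]
  have hDBsurj : Function.Surjective ((D * B).mulVecLin) := by
    rw [Matrix.mulVecLin_mul]
    exact hDsurj.comp hBsurj
  rw [hfac]
  show Module.finrank (ZMod 3) (LinearMap.range ((Bᵀ * (D * B)).mulVecLin)) = Δ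
  rw [Matrix.mulVecLin_mul,
    LinearMap.range_comp_of_range_eq_top _ (LinearMap.range_eq_top.mpr hDBsurj)]
  exact hr1
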